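/- Perturbation identities for the Drazin inverse under a norm condition: let A, E, B, X, Y be n×n quaternion matrices with B = A + E. Assume X is a k-Drazin inverse of A, Y is an m-Drazin inverse of B, E = (A * X) * E * (A * X), and ‖X * E‖₂ < 1. Then: (i) A * X = B * Y; (ii) Y - X = -(Y * E * X) and Y - X = -(X * E * Y); (iii) 1 + X * E and 1 + E * X are units of the matrix ring, and (1 + X * E) * Y = X and Y * (1 + E * X) = X. -/

import Mathlib

noncomputable section

notation "ℍ" => Quaternion ℝ

/-- The bounded ℝ-linear map `x ↦ M.mulVec x` between `PiLp 2` spaces of quaternion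
vectors. -/
def mulVecCLM {m n : ℕ} (M : Matrix (Fin m) (Fin n) ℍ) :
    PiLp 2 (fun _ : Fin n => ℍ) →L[ℝ] PiLp 2 (fun _ : Fin m => ℍ) :=
  LinearMap.toContinuousLinearMap
    { toFun := fun x => WithLp.toLp 2 (M.mulVec x)
      map_add' := fun x y => by simp [Matrix.mulVec_add]
      map_smul' := fun r x => by simp [Matrix.mulVec_smul] }

/-- The spectral norm of a quaternion matrix: the operator norm of `x ↦ M.mulVec x`. -/
def specNorm {m n : ℕ} (M : Matrix (Fin m) (Fin n) ℍ) : ℝ := ‖mulVecCLM M‖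

/-- `X` is a `k`-Drazin inverse of the square quaternion matrix `A`. -/
def IsDrazinInverse {n : ℕ} (A X : Matrix (Fin n) (Fin n) ℍ) (k : ℕ) : Prop :=
  A ^ k * X * A = A ^ k ∧ X * A * X = X ∧ A * X = X * A

lemma mulVecCLM_apply {m n : ℕ} (M : Matrix (Fin m) (Fin n) ℍ)
    (x : PiLp 2 (fun _ : Fin n => ℍ)) : mulVecCLM M x = M.mulVec x := rfl

lemma matrix_eq_one_of_mulVec {n : ℕ} (M : Matrix (Fin n) (Fin n) ℍ)
    (h : ∀ x : Fin n → ℍ, M.mulVec x = x) : M = 1 := by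
  refine Matrix.ext fun i j => ?_
  have := congrFun (h (Pi.single j 1)) i
  simpa [Matrix.mulVec_single, Matrix.one_apply, Pi.single_apply] using this

lemma mulVec_mul_right {n : ℕ} (M : Matrix (Fin n) (Fin n) ℍ) (x : Fin n → ℍ) (q : ℍ) :
    M.mulVec (fun i => x i * q) = fun i => M.mulVec x i * q := by
  funext i
  simp [Matrix.mulVec, dotProduct, Finset.sum_mul, mul_assoc]

set_option synthInstance.maxHeartbeats 400000 in
/-- From `specNorm T < 1` we get a genuine two-sided matrix inverse of `1 + T`. -/
lemma exists_two_sided_inverse {n : ℕ} (T : Matrix (Fin n) (Fin n) ℍ)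
    (h : specNorm T < 1) :
    ∃ V : Matrix (Fin n) (Fin n) ℍ, (1 + T) * V = 1 ∧ V * (1 + T) = 1 := by
  have h' : ‖-(mulVecCLM T)‖ < 1 := by
    have e : ‖-(mulVecCLM T)‖ = ‖mulVecCLM T‖ := ContinuousLinearMap.opNorm_neg _
    exact e ▸ h
  set u : (PiLp 2 (fun _ : Fin n => ℍ) →L[ℝ] PiLp 2 (fun _ : Fin n => ℍ))ˣ :=
    Units.oneSub (-(mulVecCLM T)) h' with hu
  have huval : ∀ x : Fin n → ℍ, (u : PiLp 2 (fun _ : Fin n => ℍ) →L[ℝ]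
      PiLp 2 (fun _ : Fin n => ℍ)) (WithLp.toLp 2 x) = WithLp.toLp 2 ((1 + T).mulVec x) := by
    intro x
    have : (u : PiLp 2 (fun _ : Fin n => ℍ) →L[ℝ] PiLp 2 (fun _ : Fin n => ℍ))
        = 1 - -(mulVecCLM T) := by
      rw [hu, Units.val_oneSub]
    rw [this]
    show WithLp.toLp 2 x - -(WithLp.toLp 2 (T.mulVec x)) = WithLp.toLp 2 ((1 + T).mulVec x)
    apply WithLp.ofLp_injective 2
    funext i
    simp [Matrix.add_mulVec]
  set g : PiLp 2 (fun _ : Fin n => ℍ) →L[ℝ] PiLp 2 (fun _ : Fin n => ℍ) :=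
    ((u⁻¹ : _ˣ) : PiLp 2 (fun _ : Fin n => ℍ) →L[ℝ] PiLp 2 (fun _ : Fin n => ℍ)) with hg
  have hgf : ∀ x : Fin n → ℍ, g (WithLp.toLp 2 ((1 + T).mulVec x)) = WithLp.toLp 2 x := by
    intro x
    rw [← huval x]
    calc g ((u : PiLp 2 (fun _ : Fin n => ℍ) →L[ℝ] PiLp 2 (fun _ : Fin n => ℍ)) (WithLp.toLp 2 x))
        = ((↑u⁻¹ * ↑u : PiLp 2 (fun _ : Fin n => ℍ) →L[ℝ]
            PiLp 2 (fun _ : Fin n => ℍ))) (WithLp.toLp 2 x) := rfl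
      _ = WithLp.toLp 2 x := by rw [u.inv_mul]; rfl
  have hfg : ∀ x : Fin n → ℍ, (1 + T).mulVec (g (WithLp.toLp 2 x)).ofLp = x := by
    intro x
    have h2 := huval (g (WithLp.toLp 2 x)).ofLp
    have h3 : (u : PiLp 2 (fun _ : Fin n => ℍ) →L[ℝ] PiLp 2 (fun _ : Fin n => ℍ))
        (g (WithLp.toLp 2 x)) = WithLp.toLp 2 x := by
      calc (u : PiLp 2 (fun _ : Fin n => ℍ) →L[ℝ] PiLp 2 (fun _ : Fin n => ℍ)) (g (WithLp.toLp 2 x))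
          = ((↑u * ↑u⁻¹ : PiLp 2 (fun _ : Fin n => ℍ) →L[ℝ]
              PiLp 2 (fun _ : Fin n => ℍ))) (WithLp.toLp 2 x) := rfl
        _ = WithLp.toLp 2 x := by rw [u.mul_inv]; rfl
    rw [WithLp.toLp_ofLp, h3] at h2
    exact (congrArg WithLp.ofLp h2).symm
  have hgq : ∀ (x : Fin n → ℍ) (q : ℍ), g (WithLp.toLp 2 (fun i => x i * q))
      = WithLp.toLp 2 (fun i => (g (WithLp.toLp 2 x)).ofLp i * q) := by
    intro x q
    have h1 : (fun i => x i * q) = fun i => (1 + T).mulVec (g (WithLp.toLp 2 x)).ofLp i * q := by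
      rw [hfg]
    rw [h1, ← mulVec_mul_right, hgf]
  set V : Matrix (Fin n) (Fin n) ℍ :=
    Matrix.of (fun i j => (g (WithLp.toLp 2 (Pi.single j 1))).ofLp i) with hV
  have hVg : ∀ y : Fin n → ℍ, V.mulVec y = (g (WithLp.toLp 2 y)).ofLp := by
    intro y
    have hy : (WithLp.toLp 2 y : PiLp 2 fun _ : Fin n => ℍ)
        = ∑ j, WithLp.toLp 2 (fun i => (Pi.single j 1 : Fin n → ℍ) i * y j) := by
      apply WithLp.ofLp_injective 2
      funext i
      simp [WithLp.ofLp_sum, Finset.sum_apply, Pi.single_apply, ite_mul]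
    conv_rhs => rw [hy]
    rw [map_sum]
    funext i
    rw [WithLp.ofLp_sum, Finset.sum_apply]
    simp only [hgq]
    simp [hV, Matrix.mulVec, dotProduct]
  refine ⟨V, ?_, ?_⟩
  · apply matrix_eq_one_of_mulVec
    intro x
    rw [← Matrix.mulVec_mulVec, hVg, hfg]
  · apply matrix_eq_one_of_mulVec
    intro x
    rw [← Matrix.mulVec_mulVec, hVg, hgf]

set_option maxHeartbeats 1000000

/-- Perturbation identities for the Drazin inverse of quaternion matrices, under the
norm hypothesis `‖X * E‖₂ < 1`. -/
theorem drazin_perturbation_identities_of_norm {n : ℕ}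
    (A E B X Y : Matrix (Fin n) (Fin n) ℍ) (k m : ℕ)
    (hB : B = A + E)
    (hX : IsDrazinInverse A X k) (hY : IsDrazinInverse B Y m)
    (hE : E = (A * X) * E * (A * X))
    (hnorm : specNorm (X * E) < 1) :
    A * X = B * Y ∧
    Y - X = -(Y * E * X) ∧ Y - X = -(X * E * Y) ∧
    IsUnit (1 + X * E) ∧ IsUnit (1 + E * X) ∧
    (1 + X * E) * Y = X ∧ Y * (1 + E * X) = X := by
  obtain ⟨hA1, hA2, hA3⟩ := hX
  obtain ⟨hB1, hB2, hB3⟩ := hY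
  -- basic facts about the idempotent P = A * X
  have hPX : A * X * X = X := by rw [hA3]; exact hA2
  have hXP : X * (A * X) = X := by rw [← mul_assoc]; exact hA2
  have hPP : (A * X) * (A * X) = A * X := by
    calc (A * X) * (A * X) = A * (X * A * X) := by noncomm_ring
      _ = A * X := by rw [hA2]
  have hPE : A * X * E = E := by
    conv_lhs => rw [hE]
    calc A * X * (A * X * E * (A * X)) = ((A * X) * (A * X)) * E * (A * X) := by noncomm_ring
      _ = A * X * E * (A * X) := by rw [hPP]
      _ = E := hE.symm
  have hEP : E * (A * X) = E := by
    conv_lhs => rw [hE]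
    calc (A * X * E * (A * X)) * (A * X) = A * X * E * ((A * X) * (A * X)) := by noncomm_ring
      _ = A * X * E * (A * X) := by rw [hPP]
      _ = E := hE.symm
  have hPA : A * X * A = A * (A * X) := by
    calc A * X * A = A * (X * A) := by rw [mul_assoc]
      _ = A * (A * X) := by rw [← hA3]
  have hAkP : A ^ k * (A * X) = A ^ k := by
    rw [hA3, ← mul_assoc]; exact hA1
  have hAU : A * (1 + X * E) = B := by
    rw [hB]
    calc A * (1 + X * E) = A + A * X * E := by noncomm_ring
      _ = A + E := by rw [hPE]
  have hUA : (1 + E * X) * A = B := by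
    rw [hB]
    calc (1 + E * X) * A = A + E * (X * A) := by noncomm_ring
      _ = A + E * (A * X) := by rw [← hA3]
      _ = A + E := by rw [hEP]
  have hPU : (A * X) * (1 + X * E) = (1 + X * E) * (A * X) := by
    have h1 : (A * X) * (1 + X * E) = A * X + (A * X * X) * E := by noncomm_ring
    have h2 : (1 + X * E) * (A * X) = A * X + X * (E * (A * X)) := by noncomm_ring
    rw [h1, h2, hPX, hEP]
  obtain ⟨V, hUV, hVU⟩ := exists_two_sided_inverse (X * E) hnorm
  have hPV : (A * X) * V = V * (A * X) := by
    calc (A * X) * V = (V * (1 + X * E)) * ((A * X) * V) := by rw [hVU, one_mul]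
      _ = V * ((1 + X * E) * (A * X)) * V := by noncomm_ring
      _ = V * ((A * X) * (1 + X * E)) * V := by rw [← hPU]
      _ = (V * (A * X)) * ((1 + X * E) * V) := by noncomm_ring
      _ = V * (A * X) := by rw [hUV, mul_one]
  have hBZ : B * (V * X) = A * X := by
    calc B * (V * X) = (A * (1 + X * E)) * (V * X) := by rw [hAU]
      _ = A * ((1 + X * E) * V) * X := by noncomm_ring
      _ = A * 1 * X := by rw [hUV]
      _ = A * X := by rw [mul_one]
  have hZB : (V * X) * B = A * X := by
    rw [← hUA]
    calc (V * X) * ((1 + E * X) * A) = (V * (1 + X * E)) * (X * A) := by noncomm_ring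
      _ = 1 * (X * A) := by rw [hVU]
      _ = A * X := by rw [one_mul, ← hA3]
  have hBZcomm : B * (V * X) = (V * X) * B := hBZ.trans hZB.symm
  have hPZ : (A * X) * (V * X) = V * X := by
    calc (A * X) * (V * X) = ((A * X) * V) * X := by noncomm_ring
      _ = (V * (A * X)) * X := by rw [hPV]
      _ = V * (A * X * X) := by noncomm_ring
      _ = V * X := by rw [hPX]
  have hZBZ : (V * X) * B * (V * X) = V * X := by
    rw [hZB]; exact hPZ
  -- B^j (1 - A X) = A^j (1 - A X)
  have hstep : B * (1 - A * X) = A * (1 - A * X) := by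
    rw [hB]
    calc (A + E) * (1 - A * X) = A * (1 - A * X) + (E - E * (A * X)) := by noncomm_ring
      _ = A * (1 - A * X) + (E - E) := by rw [hEP]
      _ = A * (1 - A * X) := by noncomm_ring
  have hAQ : A * (1 - A * X) = (1 - A * X) * A := by
    calc A * (1 - A * X) = A - A * (A * X) := by noncomm_ring
      _ = A - A * X * A := by rw [← hPA]
      _ = (1 - A * X) * A := by noncomm_ring
  have hpow : ∀ i : ℕ, B ^ i * (1 - A * X) = A ^ i * (1 - A * X) := by
    intro i
    induction i with
    | zero => simp
    | succ i ih =>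
      calc B ^ (i + 1) * (1 - A * X) = B ^ i * (B * (1 - A * X)) := by
            rw [pow_succ, mul_assoc]
        _ = B ^ i * ((1 - A * X) * A) := by rw [hstep, hAQ]
        _ = (B ^ i * (1 - A * X)) * A := by rw [mul_assoc]
        _ = (A ^ i * (1 - A * X)) * A := by rw [ih]
        _ = A ^ (i + 1) * (1 - A * X) := by
            rw [pow_succ, mul_assoc, ← hAQ, ← mul_assoc]
  have hBkP : B ^ k * (A * X) = B ^ k := by
    have h0 : B ^ k * (1 - A * X) = 0 := by
      rw [hpow k]
      calc A ^ k * (1 - A * X) = A ^ k - A ^ k * (A * X) := by noncomm_ring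
        _ = A ^ k - A ^ k := by rw [hAkP]
        _ = 0 := sub_self _
    have h1 : B ^ k - B ^ k * (A * X) = 0 := by
      rw [← h0]; noncomm_ring
    exact (sub_eq_zero.mp h1).symm
  have hBkZB : B ^ k * (V * X) * B = B ^ k := by
    calc B ^ k * (V * X) * B = B ^ k * ((V * X) * B) := by rw [mul_assoc]
      _ = B ^ k * (A * X) := by rw [hZB]
      _ = B ^ k := hBkP
  -- uniqueness: Y = V * X
  have hj1 : B ^ (k + m) = B ^ k * B ^ m := pow_add B k m
  have hj2 : B ^ (k + m) = B ^ m * B ^ k := by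
    rw [Nat.add_comm k m]; exact pow_add B m k
  have cBY : Commute B Y := hB3
  have cBZ : Commute B (V * X) := hBZcomm
  have hYpow : ∀ i : ℕ, Y * (B * Y) ^ i = Y := by
    intro i
    induction i with
    | zero => simp
    | succ i ih =>
      rw [pow_succ, ← mul_assoc, ih, ← mul_assoc]
      exact hB2
  have hZpow : ∀ i : ℕ, ((V * X) * B) ^ i * (V * X) = V * X := by
    intro i
    induction i with
    | zero => simp
    | succ i ih =>
      rw [pow_succ', mul_assoc, ih]
      exact hZBZ
  have hY_eq : Y = Y ^ ((k + m) + 1) * B ^ (k + m) := by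
    calc Y = Y * (B * Y) ^ (k + m) := (hYpow (k+m)).symm
      _ = Y * (B ^ (k + m) * Y ^ (k + m)) := by rw [cBY.mul_pow]
      _ = Y * (Y ^ (k + m) * B ^ (k + m)) := by rw [(cBY.pow_pow (k+m) (k+m))]
      _ = Y ^ ((k + m) + 1) * B ^ (k + m) := by rw [← mul_assoc, ← pow_succ']
  have hZ_eq : V * X = B ^ (k + m) * (V * X) ^ ((k + m) + 1) := by
    calc V * X = ((V * X) * B) ^ (k + m) * (V * X) := (hZpow (k+m)).symm
      _ = ((V * X) ^ (k + m) * B ^ (k + m)) * (V * X) := by rw [cBZ.symm.mul_pow]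
      _ = (B ^ (k + m) * (V * X) ^ (k + m)) * (V * X) := by rw [← (cBZ.pow_pow (k+m) (k+m))]
      _ = B ^ (k + m) * (V * X) ^ ((k + m) + 1) := by rw [mul_assoc, ← pow_succ]
  have hBjZB : B ^ (k + m) * (V * X) * B = B ^ (k + m) := by
    calc B ^ (k + m) * (V * X) * B = B ^ m * (B ^ k * (V * X) * B) := by
          rw [hj2, mul_assoc (B ^ m) (B ^ k) (V * X), mul_assoc (B ^ m), ← mul_assoc (B ^ k)]
      _ = B ^ m * B ^ k := by rw [hBkZB]
      _ = B ^ (k + m) := hj2.symm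
  have hBjYB : B ^ (k + m) * Y * B = B ^ (k + m) := by
    calc B ^ (k + m) * Y * B = B ^ k * (B ^ m * Y * B) := by
          rw [hj1, mul_assoc (B ^ k) (B ^ m) Y, mul_assoc (B ^ k)]
      _ = B ^ k * B ^ m := by rw [hB1]
      _ = B ^ (k + m) := hj1.symm
  have hYZB : Y = Y * ((V * X) * B) := by
    calc Y = Y ^ ((k + m) + 1) * B ^ (k + m) := hY_eq
      _ = Y ^ ((k + m) + 1) * (B ^ (k + m) * (V * X) * B) := by rw [hBjZB]
      _ = (Y ^ ((k + m) + 1) * B ^ (k + m)) * ((V * X) * B) := by noncomm_ring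
      _ = Y * ((V * X) * B) := by rw [← hY_eq]
  have cBBY : Commute (B * Y) B := by
    show (B * Y) * B = B * (B * Y)
    rw [mul_assoc, hB3, ← mul_assoc]
  have hBYBj : (B * Y) * B ^ (k + m) = B ^ (k + m) := by
    calc (B * Y) * B ^ (k + m) = B ^ (k + m) * (B * Y) := (cBBY.pow_right (k+m)).eq
      _ = B ^ (k + m) * (Y * B) := by rw [hB3]
      _ = B ^ (k + m) * Y * B := by rw [← mul_assoc]
      _ = B ^ (k + m) := hBjYB
  have hBYZ : V * X = (B * Y) * (V * X) := by
    calc V * X = B ^ (k + m) * (V * X) ^ ((k + m) + 1) := hZ_eq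
      _ = ((B * Y) * B ^ (k + m)) * (V * X) ^ ((k + m) + 1) := by rw [hBYBj]
      _ = (B * Y) * (B ^ (k + m) * (V * X) ^ ((k + m) + 1)) := by rw [mul_assoc]
      _ = (B * Y) * (V * X) := by rw [← hZ_eq]
  have hYeqZ : Y = V * X := by
    calc Y = Y * ((V * X) * B) := hYZB
      _ = Y * (B * (V * X)) := by rw [← hBZcomm]
      _ = (Y * B) * (V * X) := by rw [← mul_assoc]
      _ = (B * Y) * (V * X) := by rw [← hB3]
      _ = V * X := hBYZ.symm
  -- conclusions
  have hX1 : (1 + X * E) * Y = X := by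
    rw [hYeqZ, ← mul_assoc, hUV, one_mul]
  have hX2 : Y * (1 + E * X) = X := by
    rw [hYeqZ]
    calc (V * X) * (1 + E * X) = V * ((1 + X * E) * X) := by noncomm_ring
      _ = (V * (1 + X * E)) * X := by rw [← mul_assoc]
      _ = X := by rw [hVU, one_mul]
  refine ⟨?_, ?_, ?_, ?_, ?_, hX1, hX2⟩
  · rw [hYeqZ]; exact hBZ.symm
  · conv_lhs => rw [← hX2]
    noncomm_ring
  · conv_lhs => rw [← hX1]
    noncomm_ring
  · exact ⟨⟨1 + X * E, V, hUV, hVU⟩, rfl⟩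
  · refine ⟨⟨1 + E * X, 1 - E * (V * X), ?_, ?_⟩, rfl⟩
    · calc (1 + E * X) * (1 - E * (V * X))
          = 1 + E * X - E * (((1 + X * E) * V) * X) := by noncomm_ring
        _ = 1 + E * X - E * (1 * X) := by rw [hUV]
        _ = 1 := by noncomm_ring
    · calc (1 - E * (V * X)) * (1 + E * X)
          = 1 + E * X - E * ((V * (1 + X * E)) * X) := by noncomm_ring
        _ = 1 + E * X - E * (1 * X) := by rw [hVU]
        _ = 1 := by noncomm_ring
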